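/- For n ≥ 3 and a natural number k ≥ 1, ∫_{∂B(0,1)} x_1^{2k} e^{−i x·ξ} dσ(x) = (2π)^{n/2} (2k−1)!! Ψ_{n/2+k−1}(ξ) + o(|ξ|) as ξ → 0, where Ψ_ν(ξ) = J_ν(|ξ|)/|ξ|^ν. In particular, the limit as ξ → 0 equals (2π)^{n/2}(2k−1)!! · 2^{−(n/2+k−1)}/Γ(n/2+k). -/

import Mathlib

open MeasureTheory Real RealInnerProductSpace Asymptotics Filter

/-- Bessel function of the first kind of order `ν`, by its power series. -/
noncomputable def besselJ (ν t : ℝ) : ℝ :=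
  (t / 2) ^ ν * ∑' k : ℕ, (-1) ^ k / (k.factorial * Real.Gamma (ν + k + 1)) * (t / 2) ^ (2 * k)

open Classical in
/-- `Ψ_ν(ξ) = J_ν(|ξ|)/|ξ|^ν`, extended continuously at `ξ = 0` by `2^{−ν}/Γ(ν+1)`. -/
noncomputable def PsiE (ν : ℝ) {n : ℕ} (ξ : EuclideanSpace ℝ (Fin n)) : ℝ :=
  if ξ = 0 then (2 : ℝ) ^ (-ν) / Real.Gamma (ν + 1) else besselJ ν ‖ξ‖ / ‖ξ‖ ^ ν


section AuxProofs
open Set Metric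

lemma polar_integral {n : ℕ} (hn : 0 < n) (f : EuclideanSpace ℝ (Fin n) → ℝ)
    (F : Metric.sphere (0 : EuclideanSpace ℝ (Fin n)) 1 → ℝ) (G : ℝ → ℝ)
    (hFG : ∀ (y : Metric.sphere (0 : EuclideanSpace ℝ (Fin n)) 1) (r : Set.Ioi (0:ℝ)),
      f ((r : ℝ) • (y : EuclideanSpace ℝ (Fin n))) = F y * G r) :
    ∫ x, f x = (∫ y, F y ∂(volume : Measure (EuclideanSpace ℝ (Fin n))).toSphere)
      * ∫ r in Set.Ioi (0:ℝ), r ^ (n - 1) * G r := by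
  haveI : Nonempty (Fin n) := ⟨⟨0, hn⟩⟩
  have hdim : Module.finrank ℝ (EuclideanSpace ℝ (Fin n)) = n := finrank_euclideanSpace_fin
  calc
    ∫ x, f x = ∫ x : ({0}ᶜ : Set (EuclideanSpace ℝ (Fin n))), f x
        ∂((volume : Measure (EuclideanSpace ℝ (Fin n))).comap (↑)) := by
      rw [integral_subtype_comap (MeasurableSet.singleton _).compl f,
        MeasureTheory.restrict_compl_singleton]
    _ = ∫ p : Metric.sphere (0:EuclideanSpace ℝ (Fin n)) 1 × Set.Ioi (0:ℝ), F p.1 * G p.2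
        ∂(volume : Measure (EuclideanSpace ℝ (Fin n))).toSphere.prod
          (.volumeIoiPow (Module.finrank ℝ (EuclideanSpace ℝ (Fin n)) - 1)) := by
      rw [← (volume : Measure (EuclideanSpace ℝ (Fin n))).measurePreserving_homeomorphUnitSphereProd.integral_comp
        (Homeomorph.measurableEmbedding _) (fun p => F p.1 * G p.2)]
      refine integral_congr_ae (Filter.Eventually.of_forall fun x => ?_)
      have h := hFG ((homeomorphUnitSphereProd (EuclideanSpace ℝ (Fin n))) x).1
        ((homeomorphUnitSphereProd (EuclideanSpace ℝ (Fin n))) x).2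
      dsimp only
      rw [← h]
      congr 1
      have hx := congrArg Subtype.val
        ((homeomorphUnitSphereProd (EuclideanSpace ℝ (Fin n))).symm_apply_apply x)
      rw [homeomorphUnitSphereProd_symm_apply_coe] at hx
      exact hx.symm
    _ = (∫ y, F y ∂(volume : Measure (EuclideanSpace ℝ (Fin n))).toSphere)
        * ∫ r : Set.Ioi (0:ℝ), G r
            ∂(Measure.volumeIoiPow (Module.finrank ℝ (EuclideanSpace ℝ (Fin n)) - 1)) :=
      integral_prod_mul F (fun r : Set.Ioi (0:ℝ) => G r)
    _ = _ := by
      congr 1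
      rw [Measure.volumeIoiPow]
      simp only [ENNReal.ofReal]
      rw [integral_withDensity_eq_integral_smul
        ((measurable_subtype_coe.pow_const _).real_toNNReal),
        integral_subtype_comap measurableSet_Ioi
          (fun a : ℝ => Real.toNNReal (a ^ (Module.finrank ℝ (EuclideanSpace ℝ (Fin n)) - 1)) • G a)]
      rw [hdim]
      refine setIntegral_congr_fun measurableSet_Ioi fun x hx => ?_
      rw [NNReal.smul_def, Real.coe_toNNReal _ (pow_nonneg hx.out.le _), smul_eq_mul]

lemma gauss_Ioi (m : ℕ) : ∫ x in Ioi (0:ℝ), x ^ m * exp (-(x^2/2))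
    = (2:ℝ) ^ (((m:ℝ)+1)/2 - 1) * Gamma (((m:ℝ)+1)/2) := by
  have h := integral_rpow_mul_exp_neg_mul_rpow (p:=2) (q:=(m:ℝ)) (b:=1/2) two_pos
    (neg_one_lt_zero.trans_le (Nat.cast_nonneg m)) one_half_pos
  have h2 : ∫ x in Ioi (0:ℝ), x ^ m * exp (-(x^2/2))
      = ∫ x in Ioi (0:ℝ), x ^ (m:ℝ) * exp (-(1/2) * x ^ (2:ℝ)) := by
    refine setIntegral_congr_fun measurableSet_Ioi fun x hx => ?_
    rw [show (2:ℝ) = ((2:ℕ):ℝ) by norm_num, rpow_natCast, rpow_natCast]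
    ring_nf
  rw [h2, h]
  rw [one_div (2:ℝ), ← Real.rpow_neg_one (2:ℝ), ← Real.rpow_mul (by norm_num),
    ← Real.rpow_add (by norm_num)]
  rw [show (-1:ℝ) * (-(↑m + 1) / 2) + -1 = (↑m + 1) / 2 - 1 by ring]

lemma gauss_odd (g : ℝ → ℝ) (hg : ∀ x, g (-x) = -g x) : ∫ x, g x = 0 := by
  have h := MeasureTheory.integral_neg_eq_self g (volume : Measure ℝ)
  simp only [hg, integral_neg] at h
  linarith

lemma gauss_line (k : ℕ) : ∫ x : ℝ, x ^ (2*k) * exp (-(x^2/2))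
    = 2 * ∫ x in Ioi (0:ℝ), x ^ (2*k) * exp (-(x^2/2)) := by
  rw [← integral_comp_abs (f := fun t => t ^ (2*k) * exp (-(t^2/2)))]
  refine integral_congr_ae (Filter.Eventually.of_forall fun x => ?_)
  simp only
  rw [(even_two_mul k).pow_abs, sq_abs]

lemma Gamma_nat_add_half (k : ℕ) :
    Real.Gamma ((k:ℝ) + 1/2) = (Nat.doubleFactorial (2*k-1) : ℝ) * Real.sqrt π / 2^k := by
  induction k with
  | zero => simpa using Real.Gamma_one_half_eq
  | succ k ih =>
    have h1 : ((k+1:ℕ):ℝ) + 1/2 = ((k:ℝ) + 1/2) + 1 := by push_cast; ring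
    rw [h1, Real.Gamma_add_one (by positivity), ih]
    have h2 : Nat.doubleFactorial (2*(k+1)-1) = (2*k+1) * Nat.doubleFactorial (2*k-1) := by
      cases k with
      | zero => rfl
      | succ k =>
        have h3 : 2*(k+1+1)-1 = (2*(k+1)-1)+2 := by omega
        rw [h3, Nat.doubleFactorial]
        congr 1
    rw [h2]
    push_cast
    ring

lemma euclid_prod {n : ℕ} (g : Fin n → ℝ → ℝ) :
    ∫ x : EuclideanSpace ℝ (Fin n), ∏ i, g i (x i) = ∏ i, ∫ t : ℝ, g i t := by
  rw [← (MeasurePreserving.symm _ (EuclideanSpace.volume_preserving_symm_measurableEquiv_toLp (ι := Fin n))).integral_comp'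
    (fun x : EuclideanSpace ℝ (Fin n) => ∏ i, g i (x i))]
  exact MeasureTheory.integral_fintype_prod_eq_prod (ι := Fin n) g


lemma euclid_split {n : ℕ} (i1 : Fin n) (k : ℕ) (x : EuclideanSpace ℝ (Fin n)) :
    (x i1)^(2*k) * exp (-(‖x‖^2/2)) =
      ∏ i, ((if i = i1 then (x i)^(2*k) else 1) * exp (-((x i)^2/2))) := by
  rw [Finset.prod_mul_distrib, ← Real.exp_sum]
  have h1 : (∏ i, if i = i1 then (x i)^(2*k) else 1) = (x i1)^(2*k) := by
    simp [Finset.prod_ite_eq']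
  have h2 : ‖x‖^2 = ∑ i, (x i)^2 := by
    rw [EuclideanSpace.norm_eq, sq_sqrt (by positivity)]
    simp [sq_abs]
  rw [h1, h2]
  congr 1
  rw [Finset.sum_neg_distrib, Finset.sum_div]

lemma gauss_odd' (g : ℝ → ℝ) (hg : ∀ x, g (-x) = -g x) : ∫ x, g x = 0 := by
  have h := MeasureTheory.integral_neg_eq_self g (volume : Measure ℝ)
  simp only [hg, integral_neg] at h
  linarith

lemma euclid_moment_even {n : ℕ} (i1 : Fin n) (k : ℕ) :
    ∫ x : EuclideanSpace ℝ (Fin n), (x i1)^(2*k) * exp (-(‖x‖^2/2))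
    = (∫ t : ℝ, t^(2*k) * exp (-(t^2/2))) * (∫ t : ℝ, exp (-(t^2/2)))^(n-1) := by
  rw [integral_congr_ae (Filter.Eventually.of_forall fun x => euclid_split i1 k x),
    euclid_prod (fun i t => (if i = i1 then t^(2*k) else 1) * exp (-(t^2/2))),
    ← Finset.mul_prod_erase Finset.univ _ (Finset.mem_univ i1)]
  congr 1
  · simp
  · rw [Finset.prod_congr rfl (fun i hi => ?_), Finset.prod_const,
      Finset.card_erase_of_mem (Finset.mem_univ i1), Finset.card_univ, Fintype.card_fin]
    simp [(Finset.mem_erase.mp hi).1]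

lemma euclid_split_odd {n : ℕ} (i1 j : Fin n) (k : ℕ) (x : EuclideanSpace ℝ (Fin n)) :
    (x i1)^(2*k) * (x j) * exp (-(‖x‖^2/2)) =
      ∏ i, ((if i = i1 then (x i)^(2*k) else 1) * (if i = j then (x i) else 1)
        * exp (-((x i)^2/2))) := by
  simp_rw [Finset.prod_mul_distrib]
  rw [← Real.exp_sum]
  have h1 : (∏ i, if i = i1 then (x i)^(2*k) else 1) = (x i1)^(2*k) := by
    simp [Finset.prod_ite_eq']
  have h1' : (∏ i, if i = j then (x i) else 1) = x j := by
    simp [Finset.prod_ite_eq']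
  have h2 : ‖x‖^2 = ∑ i, (x i)^2 := by
    rw [EuclideanSpace.norm_eq, sq_sqrt (by positivity)]
    simp [sq_abs]
  rw [h1, h1', h2]
  congr 1
  rw [Finset.sum_neg_distrib, Finset.sum_div]

lemma euclid_moment_odd {n : ℕ} (i1 j : Fin n) (k : ℕ) :
    ∫ x : EuclideanSpace ℝ (Fin n), (x i1)^(2*k) * (x j) * exp (-(‖x‖^2/2)) = 0 := by
  rw [integral_congr_ae (Filter.Eventually.of_forall fun x => euclid_split_odd i1 j k x),
    euclid_prod (fun i t => (if i = i1 then t^(2*k) else 1) * (if i = j then t else 1)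
      * exp (-(t^2/2)))]
  refine Finset.prod_eq_zero (Finset.mem_univ j) ?_
  refine gauss_odd' _ fun t => ?_
  by_cases hj : j = i1 <;>
    simp [hj, Even.neg_pow (even_two_mul k), neg_sq] <;> ring







lemma oneD_even_moment (k : ℕ) : ∫ t : ℝ, t^(2*k) * exp (-(t^2/2))
    = (2*π)^((1:ℝ)/2) * (Nat.doubleFactorial (2*k-1) : ℝ) := by
  rw [gauss_line, gauss_Ioi,
    show (((2*k:ℕ):ℝ)+1)/2 = (k:ℝ) + 1/2 by push_cast; ring,
    _root_.Gamma_nat_add_half]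
  rw [Real.mul_rpow (by norm_num) pi_pos.le, Real.sqrt_eq_rpow,
    ← Real.rpow_natCast (2:ℝ) k]
  rw [show (2:ℝ) * ((2:ℝ) ^ (((k:ℝ) + 1/2) - 1) * ((Nat.doubleFactorial (2*k-1) : ℝ)
      * π ^ ((1:ℝ)/2) / (2:ℝ) ^ ((k:ℝ)))) = (2:ℝ) ^ (1:ℝ) * (2:ℝ) ^ (((k:ℝ) + 1/2) - 1)
      / (2:ℝ) ^ ((k:ℝ)) * π ^ ((1:ℝ)/2) * (Nat.doubleFactorial (2*k-1) : ℝ) by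
    rw [Real.rpow_one]; ring]
  rw [← Real.rpow_add two_pos, ← Real.rpow_sub two_pos,
    show (1:ℝ) + ((k:ℝ) + 1/2 - 1) - (k:ℝ) = 1/2 by ring]

lemma oneD_gauss : ∫ t : ℝ, exp (-(t^2/2)) = (2*π)^((1:ℝ)/2) := by
  have h := integral_gaussian (1/2)
  rw [show ∫ t : ℝ, exp (-(t^2/2)) = ∫ t : ℝ, exp (-(1/2) * t^2) by
      refine integral_congr_ae (Filter.Eventually.of_forall fun t => ?_); ring_nf,
    h, show π / (1/2) = 2*π by ring, Real.sqrt_eq_rpow]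

lemma sphere_moment {n : ℕ} (hn : 3 ≤ n) (i1 : Fin n) (k : ℕ) :
    (∫ y : Metric.sphere (0 : EuclideanSpace ℝ (Fin n)) 1,
      ((y : EuclideanSpace ℝ (Fin n)) i1)^(2*k)
      ∂(volume : Measure (EuclideanSpace ℝ (Fin n))).toSphere)
    = (2*π)^((n:ℝ)/2) * (Nat.doubleFactorial (2*k-1) : ℝ)
      * (2:ℝ)^(-((n:ℝ)/2 + (k:ℝ) - 1)) / Gamma ((n:ℝ)/2 + k) := by
  have hpol := polar_integral (by omega : 0 < n)
    (fun x => (x i1)^(2*k) * exp (-(‖x‖^2/2)))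
    (fun y => ((y : EuclideanSpace ℝ (Fin n)) i1)^(2*k))
    (fun r => r^(2*k) * exp (-(r^2/2)))
    (fun y r => by
      have hy : ‖(y : EuclideanSpace ℝ (Fin n))‖ = 1 := mem_sphere_zero_iff_norm.mp y.2
      have hr : (0:ℝ) < r := r.2
      simp only [PiLp.smul_apply, smul_eq_mul, norm_smul, hy, Real.norm_eq_abs, mul_one,
        abs_of_pos hr]
      ring)
  have hrad : (∫ r in Ioi (0:ℝ), r^(n-1) * (r^(2*k) * exp (-(r^2/2))))
      = 2^(((n:ℝ)/2 + k) - 1) * Gamma ((n:ℝ)/2 + k) := by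
    rw [setIntegral_congr_fun measurableSet_Ioi
      (fun r _ => by rw [pow_add ((r:ℝ)) (n-1) (2*k)]; ring :
        ∀ r ∈ Ioi (0:ℝ), r^(n-1) * (r^(2*k) * exp (-(r^2/2)))
          = r^((n-1)+2*k) * exp (-(r^2/2))), gauss_Ioi]
    have hc : ((n-1+2*k : ℕ):ℝ) + 1 = (n:ℝ) + 2*k := by
      push_cast [Nat.cast_sub (by omega : 1 ≤ n)]; ring
    rw [hc, show ((n:ℝ) + 2*k)/2 = (n:ℝ)/2 + k by ring]
  have heu := euclid_moment_even i1 k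
  rw [oneD_even_moment, oneD_gauss] at heu
  have hBpow : ((2*π)^((1:ℝ)/2))^(n-1) = (2*π)^(((n:ℝ)-1)/2) := by
    rw [← Real.rpow_natCast ((2*π)^((1:ℝ)/2)) (n-1), ← Real.rpow_mul (by positivity),
      Nat.cast_sub (by omega : 1 ≤ n)]
    norm_num
    ring_nf
  rw [hBpow] at heu
  have hAB : (2*π)^((1:ℝ)/2) * (Nat.doubleFactorial (2*k-1) : ℝ) * (2*π)^(((n:ℝ)-1)/2)
      = (Nat.doubleFactorial (2*k-1) : ℝ) * (2*π)^((n:ℝ)/2) := by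
    rw [show (2*π)^((1:ℝ)/2) * (Nat.doubleFactorial (2*k-1) : ℝ) * (2*π)^(((n:ℝ)-1)/2)
        = (Nat.doubleFactorial (2*k-1) : ℝ) * ((2*π)^((1:ℝ)/2) * (2*π)^(((n:ℝ)-1)/2)) by ring,
      ← Real.rpow_add (by positivity), show (1:ℝ)/2 + ((n:ℝ)-1)/2 = (n:ℝ)/2 by ring]
  rw [hAB] at heu
  rw [hrad, heu] at hpol
  have hG : 0 < Gamma ((n:ℝ)/2 + k) := Gamma_pos_of_pos (by positivity)
  have hR : (0:ℝ) < 2^(((n:ℝ)/2 + k) - 1) := Real.rpow_pos_of_pos two_pos _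
  rw [Real.rpow_neg two_pos.le, show ((n:ℝ)/2 + (k:ℝ) - 1) = ((n:ℝ)/2 + k) - 1 by ring]
  field_simp at hpol ⊢
  linarith [hpol]

lemma sphere_moment_odd {n : ℕ} (hn : 3 ≤ n) (i1 j : Fin n) (k : ℕ) :
    (∫ y : Metric.sphere (0 : EuclideanSpace ℝ (Fin n)) 1,
      ((y : EuclideanSpace ℝ (Fin n)) i1)^(2*k) * ((y : EuclideanSpace ℝ (Fin n)) j)
      ∂(volume : Measure (EuclideanSpace ℝ (Fin n))).toSphere) = 0 := by
  have hpol := polar_integral (by omega : 0 < n)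
    (fun x => (x i1)^(2*k) * (x j) * exp (-(‖x‖^2/2)))
    (fun y => ((y : EuclideanSpace ℝ (Fin n)) i1)^(2*k) * ((y : EuclideanSpace ℝ (Fin n)) j))
    (fun r => r^(2*k+1) * exp (-(r^2/2)))
    (fun y r => by
      have hy : ‖(y : EuclideanSpace ℝ (Fin n))‖ = 1 := mem_sphere_zero_iff_norm.mp y.2
      have hr : (0:ℝ) < r := r.2
      simp only [PiLp.smul_apply, smul_eq_mul, norm_smul, hy, Real.norm_eq_abs, mul_one,
        abs_of_pos hr]
      ring)
  rw [euclid_moment_odd] at hpol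
  have hrad : (∫ r in Ioi (0:ℝ), r^(n-1) * (r^(2*k+1) * exp (-(r^2/2))))
      = 2^((((n-1+(2*k+1):ℕ):ℝ)+1)/2 - 1) * Gamma ((((n-1+(2*k+1):ℕ):ℝ)+1)/2) := by
    rw [setIntegral_congr_fun measurableSet_Ioi
      (fun r _ => by rw [pow_add ((r:ℝ)) (n-1) (2*k+1)]; ring :
        ∀ r ∈ Ioi (0:ℝ), r^(n-1) * (r^(2*k+1) * exp (-(r^2/2)))
          = r^((n-1)+(2*k+1)) * exp (-(r^2/2))), gauss_Ioi]
  rw [hrad] at hpol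
  have hG : 0 < Gamma ((((n-1+(2*k+1):ℕ):ℝ)+1)/2) := Gamma_pos_of_pos (by positivity)
  have hR : (0:ℝ) < 2^(((((n-1+(2*k+1):ℕ):ℝ))+1)/2 - 1) := Real.rpow_pos_of_pos two_pos _
  have := mul_pos hR hG
  rcases mul_eq_zero.mp hpol.symm with h | h
  · exact h
  · exact absurd h (ne_of_gt this)
noncomputable def Sser (ν t : ℝ) : ℝ :=
  ∑' m : ℕ, (-1) ^ m / (m.factorial * Real.Gamma (ν + m + 1)) * (t / 2) ^ (2 * m)

lemma gamma_le (ν : ℝ) (hν : 0 ≤ ν) (m : ℕ) :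
    Real.Gamma (ν + 1) ≤ Real.Gamma (ν + m + 1) := by
  induction m with
  | zero => simp
  | succ m ih =>
    have h1 : ν + ((m+1 : ℕ) : ℝ) + 1 = (ν + m + 1) + 1 := by push_cast; ring
    have h2 := Real.Gamma_add_one (s := ν + m + 1)
      (by positivity : (0:ℝ) < ν + m + 1).ne'
    rw [h1, h2]
    calc Real.Gamma (ν + 1) ≤ Real.Gamma (ν + m + 1) := ih
    _ = 1 * Real.Gamma (ν + m + 1) := (one_mul _).symm
    _ ≤ (ν + m + 1) * Real.Gamma (ν + m + 1) := by
        refine mul_le_mul_of_nonneg_right ?_ (Real.Gamma_pos_of_pos (by positivity)).le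
        have : (0:ℝ) ≤ m := Nat.cast_nonneg m
        linarith

lemma fact_summable : Summable (fun m : ℕ => (1:ℝ)/m.factorial) := by
  simpa using Real.summable_pow_div_factorial 1

lemma term_norm (ν t : ℝ) (hν : 0 ≤ ν) (m : ℕ) :
    ‖(-1:ℝ)^m / (m.factorial * Real.Gamma (ν + m + 1)) * (t/2)^(2*m)‖
      = 1/((m.factorial:ℝ) * Real.Gamma (ν + m + 1)) * |t/2|^(2*m) := by
  have hGm : 0 < Real.Gamma (ν + m + 1) := Real.Gamma_pos_of_pos (by positivity)
  have hmf : (0:ℝ) < (m.factorial : ℝ) := by exact_mod_cast m.factorial_pos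
  rw [Real.norm_eq_abs, abs_mul, abs_div, abs_pow, abs_pow, abs_neg, abs_one, one_pow,
    abs_of_pos (by positivity : (0:ℝ) < (m.factorial:ℝ) * Real.Gamma (ν+m+1))]

lemma term_le (ν : ℝ) (hν : 0 ≤ ν) (m : ℕ) :
    1/((m.factorial:ℝ) * Real.Gamma (ν + m + 1)) ≤ 1/Real.Gamma (ν+1) * (1/m.factorial) := by
  have hG1 : 0 < Real.Gamma (ν + 1) := Real.Gamma_pos_of_pos (by positivity)
  have hmf : (0:ℝ) < (m.factorial : ℝ) := by exact_mod_cast m.factorial_pos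
  rw [one_div_mul_one_div]
  refine one_div_le_one_div_of_le (by positivity) ?_
  rw [mul_comm]
  exact mul_le_mul_of_nonneg_left (gamma_le ν hν m) (by positivity)

lemma sser_summable (ν : ℝ) (hν : 0 ≤ ν) {t : ℝ} (ht : |t| ≤ 2) :
    Summable (fun m : ℕ =>
      (-1) ^ m / (m.factorial * Real.Gamma (ν + m + 1)) * (t / 2) ^ (2 * m)) := by
  refine Summable.of_norm_bounded (g := fun m : ℕ => 1/Real.Gamma (ν+1) * (1/m.factorial))
    (fact_summable.mul_left _) (fun m => ?_)
  rw [term_norm ν t hν m]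
  have h1 : |t/2| ≤ 1 := by rw [abs_div]; simp; linarith [ht]
  have h2 : |t/2| ^ (2*m) ≤ 1 := pow_le_one₀ (abs_nonneg _) h1
  have hGm : 0 < Real.Gamma (ν + m + 1) := Real.Gamma_pos_of_pos (by positivity)
  have hmf : (0:ℝ) < (m.factorial : ℝ) := by exact_mod_cast m.factorial_pos
  calc 1 / ((m.factorial : ℝ) * Real.Gamma (ν + m + 1)) * |t/2|^(2*m)
      ≤ 1 / ((m.factorial : ℝ) * Real.Gamma (ν + m + 1)) * 1 :=
        mul_le_mul_of_nonneg_left h2 (by positivity)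
    _ = 1 / ((m.factorial : ℝ) * Real.Gamma (ν + m + 1)) := mul_one _
    _ ≤ _ := term_le ν hν m

lemma sser_zero (ν : ℝ) : Sser ν 0 = 1 / Real.Gamma (ν + 1) := by
  rw [Sser, tsum_eq_single 0 (fun m hm => by
    rw [zero_div, zero_pow (by omega : 2*m ≠ 0), mul_zero])]
  norm_num

lemma psi_eq_sser (ν : ℝ) (hν : 0 ≤ ν) {n : ℕ} (ξ : EuclideanSpace ℝ (Fin n)) :
    PsiE ν ξ = (2:ℝ)^(-ν) * Sser ν ‖ξ‖ := by
  by_cases h : ξ = 0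
  · rw [PsiE, if_pos h, h, norm_zero, sser_zero ν, Real.rpow_neg two_pos.le]
    field_simp
  · rw [PsiE, if_neg h, besselJ]
    have ht : (0:ℝ) < ‖ξ‖ := norm_pos_iff.mpr h
    have h1 : (‖ξ‖/2) ^ ν = ‖ξ‖ ^ ν / (2:ℝ) ^ ν := Real.div_rpow (norm_nonneg ξ) two_pos.le ν
    rw [h1, Real.rpow_neg two_pos.le, ← Sser]
    have h2 : ‖ξ‖ ^ ν ≠ 0 := (Real.rpow_pos_of_pos ht ν).ne'
    have h3 : (2:ℝ) ^ ν ≠ 0 := (Real.rpow_pos_of_pos two_pos ν).ne'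
    field_simp

lemma sser_bound (ν : ℝ) (hν : 0 ≤ ν) :
    ∃ C : ℝ, 0 ≤ C ∧ ∀ t : ℝ, 0 ≤ t → t ≤ 1 →
      |Sser ν t - 1 / Real.Gamma (ν + 1)| ≤ C * t^2 := by
  have hG1 : 0 < Real.Gamma (ν + 1) := Real.Gamma_pos_of_pos (by positivity)
  have htn : (0:ℝ) ≤ ∑' m : ℕ, (1:ℝ)/m.factorial :=
    tsum_nonneg (fun m => by positivity)
  refine ⟨(∑' m : ℕ, (1:ℝ)/m.factorial) / Real.Gamma (ν+1),
    div_nonneg htn hG1.le, fun t ht0 ht1 => ?_⟩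
  set f : ℕ → ℝ := fun m =>
    (-1) ^ m / (m.factorial * Real.Gamma (ν + m + 1)) * (t / 2) ^ (2 * m) with hf
  have hsum : Summable f := sser_summable ν hν (t := t) (by rw [abs_of_nonneg ht0]; linarith)
  have hSf : Sser ν t = ∑' m, f m := rfl
  rw [hSf, hsum.tsum_eq_zero_add]
  have h0 : f 0 = 1 / Real.Gamma (ν + 1) := by
    simp [hf, Nat.factorial]
  rw [h0, add_sub_cancel_left]
  set g : ℕ → ℝ := fun m => (1/(m.factorial:ℝ)) / Real.Gamma (ν+1) * t^2 with hg
  have hgsum : Summable g := (fact_summable.div_const _).mul_right _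
  have hterm : ∀ m : ℕ, ‖f (m+1)‖ ≤ g m := by
    intro m
    rw [hf]
    rw [term_norm ν t hν (m+1)]
    have hth : |t/2| ≤ 1 := by
      rw [abs_of_nonneg (by linarith)]; linarith
    have hsplit : |t/2| ^ (2*(m+1)) ≤ t^2 := by
      have he : (2*(m+1)) = 2 + 2*m := by ring
      rw [he, pow_add]
      calc |t/2|^2 * |t/2|^(2*m) ≤ |t/2|^2 * 1 :=
            mul_le_mul_of_nonneg_left (pow_le_one₀ (abs_nonneg _) hth) (by positivity)
        _ = (t/2)^2 := by rw [mul_one, sq_abs]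
        _ ≤ t^2 := by nlinarith
    have hfac : (m.factorial : ℝ) ≤ ((m+1).factorial : ℝ) := by
      exact_mod_cast Nat.factorial_le (Nat.le_succ m)
    have hmf : (0:ℝ) < (m.factorial : ℝ) := by exact_mod_cast m.factorial_pos
    have hmf1 : (0:ℝ) < ((m+1).factorial : ℝ) := by exact_mod_cast (m+1).factorial_pos
    have hGm : 0 < Real.Gamma (ν + ((m+1:ℕ):ℝ) + 1) := Real.Gamma_pos_of_pos (by positivity)
    calc 1 / ((((m+1).factorial : ℕ) : ℝ) * Real.Gamma (ν + ((m+1:ℕ):ℝ) + 1)) * |t/2|^(2*(m+1))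
        ≤ (1/Real.Gamma (ν+1) * (1/((m+1).factorial:ℝ))) * t^2 :=
          mul_le_mul (term_le ν hν (m+1)) hsplit (by positivity) (by positivity)
      _ ≤ g m := by
          rw [hg]
          have : (1:ℝ)/((m+1).factorial:ℝ) ≤ 1/(m.factorial:ℝ) :=
            one_div_le_one_div_of_le hmf hfac
          have ht2 : (0:ℝ) ≤ t^2 := sq_nonneg t
          calc 1/Real.Gamma (ν+1) * (1/((m+1).factorial:ℝ)) * t^2
              ≤ 1/Real.Gamma (ν+1) * (1/(m.factorial:ℝ)) * t^2 := by
                refine mul_le_mul_of_nonneg_right ?_ ht2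
                exact mul_le_mul_of_nonneg_left this (by positivity)
            _ = (1/(m.factorial:ℝ)) / Real.Gamma (ν+1) * t^2 := by ring
  have hnsum : Summable (fun m => ‖f (m+1)‖) :=
    Summable.of_nonneg_of_le (fun m => norm_nonneg _) hterm hgsum
  calc |∑' m, f (m+1)| ≤ ∑' m, ‖f (m+1)‖ := by
        rw [← Real.norm_eq_abs]; exact norm_tsum_le_tsum_norm hnsum
    _ ≤ ∑' m, g m := Summable.tsum_le_tsum hterm hnsum hgsum
    _ = (∑' m : ℕ, (1:ℝ)/m.factorial) / Real.Gamma (ν+1) * t^2 := by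
        rw [hg, tsum_mul_right, tsum_div_const]




lemma coord_abs_le {n : ℕ} (x : EuclideanSpace ℝ (Fin n)) (i : Fin n) : |x i| ≤ ‖x‖ := by
  rw [EuclideanSpace.norm_eq, ← Real.sqrt_sq_eq_abs]
  refine Real.sqrt_le_sqrt ?_
  have := Finset.single_le_sum (f := fun j => ‖x j‖^2) (fun j _ => by positivity)
    (Finset.mem_univ i)
  simpa [sq_abs] using this

lemma sphere_integrable {n : ℕ}
    {g : (Metric.sphere (0 : EuclideanSpace ℝ (Fin n)) 1) → ℂ} (hgc : Continuous g)
    (C : ℝ) (hb : ∀ x, ‖g x‖ ≤ C) :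
    Integrable g (volume : Measure (EuclideanSpace ℝ (Fin n))).toSphere :=
  Integrable.mono' (integrable_const C) hgc.aestronglyMeasurable (ae_of_all _ hb)

lemma sphere_integrable' {n : ℕ}
    {g : (Metric.sphere (0 : EuclideanSpace ℝ (Fin n)) 1) → ℝ} (hgc : Continuous g)
    (C : ℝ) (hb : ∀ x, ‖g x‖ ≤ C) :
    Integrable g (volume : Measure (EuclideanSpace ℝ (Fin n))).toSphere :=
  Integrable.mono' (integrable_const C) hgc.aestronglyMeasurable (ae_of_all _ hb)

variable {n : ℕ}

lemma cont_coord (i1 : Fin n) : Continuous (fun x : Metric.sphere (0 : EuclideanSpace ℝ (Fin n)) 1 =>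
    (x : EuclideanSpace ℝ (Fin n)) i1) :=
  (EuclideanSpace.proj (𝕜 := ℝ) i1).continuous.comp continuous_subtype_val

lemma sphere_norm_one (x : Metric.sphere (0 : EuclideanSpace ℝ (Fin n)) 1) :
    ‖(x : EuclideanSpace ℝ (Fin n))‖ = 1 :=
  mem_sphere_zero_iff_norm.mp x.2

lemma sphere_coord_le (i1 : Fin n) (x : Metric.sphere (0 : EuclideanSpace ℝ (Fin n)) 1) :
    |(x : EuclideanSpace ℝ (Fin n)) i1| ≤ 1 := by
  exact (coord_abs_le _ _).trans (le_of_eq (sphere_norm_one x))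

lemma L_real_zero (hn : 3 ≤ n) (i1 : Fin n) (k : ℕ) (ξ : EuclideanSpace ℝ (Fin n)) :
    ∫ x : Metric.sphere (0 : EuclideanSpace ℝ (Fin n)) 1,
      ((x : EuclideanSpace ℝ (Fin n)) i1)^(2*k) * ⟪(x : EuclideanSpace ℝ (Fin n)), ξ⟫
      ∂(volume : Measure (EuclideanSpace ℝ (Fin n))).toSphere = 0 := by
  have hinner : ∀ x : Metric.sphere (0 : EuclideanSpace ℝ (Fin n)) 1,
      ⟪(x : EuclideanSpace ℝ (Fin n)), ξ⟫ = ∑ j, (x : EuclideanSpace ℝ (Fin n)) j * ξ j :=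
    fun x => by simp [PiLp.inner_apply, RCLike.inner_apply, conj_trivial]; exact Finset.sum_congr rfl fun _ _ => mul_comm _ _
  have hstep : (fun x : Metric.sphere (0 : EuclideanSpace ℝ (Fin n)) 1 =>
      ((x : EuclideanSpace ℝ (Fin n)) i1)^(2*k) * ⟪(x : EuclideanSpace ℝ (Fin n)), ξ⟫)
      = fun x : Metric.sphere (0 : EuclideanSpace ℝ (Fin n)) 1 =>
        ∑ j, (((x : EuclideanSpace ℝ (Fin n)) i1)^(2*k)
          * ((x : EuclideanSpace ℝ (Fin n)) j)) * ξ j := by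
    funext x
    rw [hinner x, Finset.mul_sum]
    exact Finset.sum_congr rfl (fun j _ => by ring)
  rw [hstep, integral_finset_sum _ (fun j _ => ?_)]
  · refine Finset.sum_eq_zero fun j _ => ?_
    rw [integral_mul_const, sphere_moment_odd hn i1 j k, zero_mul]
  · refine sphere_integrable' ((((cont_coord i1).pow (2*k)).mul (cont_coord j)).mul continuous_const)
      (|ξ j|) (fun x => ?_)
    rw [Real.norm_eq_abs, abs_mul, abs_mul, abs_pow]
    have h1 : |(x : EuclideanSpace ℝ (Fin n)) i1| ^ (2*k) ≤ 1 :=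
      pow_le_one₀ (abs_nonneg _) (sphere_coord_le i1 x)
    have h2 : |(x : EuclideanSpace ℝ (Fin n)) j| ≤ 1 := sphere_coord_le j x
    have h3 : |(x : EuclideanSpace ℝ (Fin n)) i1| ^ (2*k)
        * |(x : EuclideanSpace ℝ (Fin n)) j| ≤ 1 :=
      mul_le_one₀ h1 (abs_nonneg _) h2
    nlinarith [abs_nonneg (ξ j)]

lemma phi_bound (hn : 3 ≤ n) (i1 : Fin n) (k : ℕ) (ξ : EuclideanSpace ℝ (Fin n))
    (hξ : ‖ξ‖ ≤ 1) :
    ‖(∫ x : Metric.sphere (0 : EuclideanSpace ℝ (Fin n)) 1,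
        (((x : EuclideanSpace ℝ (Fin n)) i1) ^ (2 * k) : ℂ) *
          Complex.exp (-Complex.I * (⟪(x : EuclideanSpace ℝ (Fin n)), ξ⟫ : ℝ))
        ∂((volume : Measure (EuclideanSpace ℝ (Fin n))).toSphere))
      - ((∫ y : Metric.sphere (0 : EuclideanSpace ℝ (Fin n)) 1,
          ((y : EuclideanSpace ℝ (Fin n)) i1)^(2*k)
          ∂((volume : Measure (EuclideanSpace ℝ (Fin n))).toSphere) : ℝ) : ℂ)‖
    ≤ (((volume : Measure (EuclideanSpace ℝ (Fin n))).toSphere Set.univ).toReal) * ‖ξ‖^2 := by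
  set a : Metric.sphere (0 : EuclideanSpace ℝ (Fin n)) 1 → ℂ :=
    fun x => (((x : EuclideanSpace ℝ (Fin n)) i1 : ℝ) : ℂ)^(2*k) with ha
  set t : Metric.sphere (0 : EuclideanSpace ℝ (Fin n)) 1 → ℝ :=
    fun x => ⟪(x : EuclideanSpace ℝ (Fin n)), ξ⟫ with htdef
  have hca : Continuous a := (Complex.continuous_ofReal.comp (cont_coord i1)).pow _
  have hct : Continuous t := continuous_subtype_val.inner continuous_const
  have hce : Continuous (fun x => Complex.exp (-Complex.I * (t x : ℂ))) :=
    Complex.continuous_exp.comp (continuous_const.mul (Complex.continuous_ofReal.comp hct))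
  have hna : ∀ x, ‖a x‖ ≤ 1 := fun x => by
    rw [ha]
    simp only [norm_pow, Complex.norm_real, Real.norm_eq_abs]
    exact pow_le_one₀ (abs_nonneg _) (sphere_coord_le i1 x)
  have hne : ∀ x, ‖Complex.exp (-Complex.I * (t x : ℂ))‖ = 1 := fun x => by
    rw [show -Complex.I * (t x : ℂ) = ((-(t x) : ℝ) : ℂ) * Complex.I by push_cast; ring,
      Complex.norm_exp_ofReal_mul_I]
  have hnt : ∀ x, |t x| ≤ ‖ξ‖ := fun x => by
    calc |t x| ≤ ‖(x : EuclideanSpace ℝ (Fin n))‖ * ‖ξ‖ := abs_real_inner_le_norm _ _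
      _ = ‖ξ‖ := by rw [sphere_norm_one x, one_mul]
  have hnz : ∀ x, ‖-Complex.I * (t x : ℂ)‖ = |t x| := fun x => by
    rw [norm_mul, norm_neg, Complex.norm_I, one_mul, Complex.norm_real, Real.norm_eq_abs]
  have h1 : Integrable (fun x => a x * Complex.exp (-Complex.I * (t x : ℂ)))
      (volume : Measure (EuclideanSpace ℝ (Fin n))).toSphere := by
    refine sphere_integrable (hca.mul hce) 1 (fun x => ?_)
    rw [norm_mul, hne x, mul_one]; exact hna x
  have h2 : Integrable a (volume : Measure (EuclideanSpace ℝ (Fin n))).toSphere :=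
    sphere_integrable hca 1 hna
  have h3 : Integrable (fun x => a x * (-Complex.I * (t x : ℂ)))
      (volume : Measure (EuclideanSpace ℝ (Fin n))).toSphere := by
    refine sphere_integrable (hca.mul
      (continuous_const.mul (Complex.continuous_ofReal.comp hct))) ‖ξ‖ (fun x => ?_)
    rw [norm_mul, hnz x]
    calc ‖a x‖ * |t x| ≤ 1 * ‖ξ‖ :=
      mul_le_mul (hna x) (hnt x) (abs_nonneg _) zero_le_one
    _ = ‖ξ‖ := one_mul _
  have hLC : ∫ x, a x * (-Complex.I * (t x : ℂ))
      ∂(volume : Measure (EuclideanSpace ℝ (Fin n))).toSphere = 0 := by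
    have he : (fun x => a x * (-Complex.I * (t x : ℂ)))
        = fun x : Metric.sphere (0 : EuclideanSpace ℝ (Fin n)) 1 => (-Complex.I) *
          ((((x : EuclideanSpace ℝ (Fin n)) i1)^(2*k) * t x : ℝ) : ℂ) := by
      funext x; rw [ha]; push_cast; ring
    rw [he, integral_const_mul]
    have hr : (∫ x : Metric.sphere (0 : EuclideanSpace ℝ (Fin n)) 1,
        ((((x : EuclideanSpace ℝ (Fin n)) i1)^(2*k) * t x : ℝ) : ℂ)
        ∂(volume : Measure (EuclideanSpace ℝ (Fin n))).toSphere)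
        = (((∫ x : Metric.sphere (0 : EuclideanSpace ℝ (Fin n)) 1,
          ((x : EuclideanSpace ℝ (Fin n)) i1)^(2*k) * t x
          ∂(volume : Measure (EuclideanSpace ℝ (Fin n))).toSphere) : ℝ) : ℂ) :=
      integral_ofReal
    rw [hr]
    simp only [htdef]
    rw [L_real_zero hn i1 k ξ]
    simp
  have hS : ((∫ y : Metric.sphere (0 : EuclideanSpace ℝ (Fin n)) 1,
      ((y : EuclideanSpace ℝ (Fin n)) i1)^(2*k)
      ∂((volume : Measure (EuclideanSpace ℝ (Fin n))).toSphere) : ℝ) : ℂ)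
      = ∫ x, a x ∂(volume : Measure (EuclideanSpace ℝ (Fin n))).toSphere := by
    rw [show (∫ x, a x ∂(volume : Measure (EuclideanSpace ℝ (Fin n))).toSphere)
        = ∫ x : Metric.sphere (0 : EuclideanSpace ℝ (Fin n)) 1,
          ((((x : EuclideanSpace ℝ (Fin n)) i1)^(2*k) : ℝ) : ℂ)
          ∂(volume : Measure (EuclideanSpace ℝ (Fin n))).toSphere from
      integral_congr_ae (Filter.Eventually.of_forall fun x => by rw [ha]; push_cast; ring)]
    exact integral_ofReal.symm
  have hE3 : Integrable (fun x => a x * Complex.exp (-Complex.I * (t x : ℂ)) - a x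
      - a x * (-Complex.I * (t x : ℂ)))
      (volume : Measure (EuclideanSpace ℝ (Fin n))).toSphere := (h1.sub h2).sub h3
  have hmain : (∫ x : Metric.sphere (0 : EuclideanSpace ℝ (Fin n)) 1,
        (((x : EuclideanSpace ℝ (Fin n)) i1) ^ (2 * k) : ℂ) *
          Complex.exp (-Complex.I * (⟪(x : EuclideanSpace ℝ (Fin n)), ξ⟫ : ℝ))
        ∂((volume : Measure (EuclideanSpace ℝ (Fin n))).toSphere))
      - ((∫ y : Metric.sphere (0 : EuclideanSpace ℝ (Fin n)) 1,
          ((y : EuclideanSpace ℝ (Fin n)) i1)^(2*k)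
          ∂((volume : Measure (EuclideanSpace ℝ (Fin n))).toSphere) : ℝ) : ℂ)
      = ∫ x, (a x * Complex.exp (-Complex.I * (t x : ℂ)) - a x
          - a x * (-Complex.I * (t x : ℂ)))
          ∂(volume : Measure (EuclideanSpace ℝ (Fin n))).toSphere := by
    rw [hS, ← integral_sub h1 h2]
    have he2 : (fun x => a x * Complex.exp (-Complex.I * (t x : ℂ)) - a x)
        = fun x => (a x * Complex.exp (-Complex.I * (t x : ℂ)) - a x
            - a x * (-Complex.I * (t x : ℂ))) + a x * (-Complex.I * (t x : ℂ)) := by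
      funext x; ring
    rw [he2, integral_add hE3 h3, hLC, add_zero]
  rw [hmain]
  calc ‖∫ x, (a x * Complex.exp (-Complex.I * (t x : ℂ)) - a x
        - a x * (-Complex.I * (t x : ℂ)))
        ∂(volume : Measure (EuclideanSpace ℝ (Fin n))).toSphere‖
      ≤ ∫ x, ‖a x * Complex.exp (-Complex.I * (t x : ℂ)) - a x
          - a x * (-Complex.I * (t x : ℂ))‖
          ∂(volume : Measure (EuclideanSpace ℝ (Fin n))).toSphere :=
        norm_integral_le_integral_norm _
    _ ≤ ∫ _x, ‖ξ‖^2 ∂(volume : Measure (EuclideanSpace ℝ (Fin n))).toSphere := by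
        refine integral_mono hE3.norm (integrable_const _) (fun x => ?_)
        have hfac : a x * Complex.exp (-Complex.I * (t x : ℂ)) - a x
            - a x * (-Complex.I * (t x : ℂ))
            = a x * (Complex.exp (-Complex.I * (t x : ℂ)) - 1 - (-Complex.I * (t x : ℂ))) := by
          ring
        rw [hfac, norm_mul]
        have hz1 : ‖-Complex.I * (t x : ℂ)‖ ≤ 1 := by
          rw [hnz x]; exact (hnt x).trans hξ
        have hexp : ‖Complex.exp (-Complex.I * (t x : ℂ)) - 1 - (-Complex.I * (t x : ℂ))‖
            ≤ ‖-Complex.I * (t x : ℂ)‖^2 := by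
          have := Complex.norm_exp_sub_one_sub_id_le (x := -Complex.I * (t x : ℂ)) hz1
          simpa using this
        calc ‖a x‖ * ‖Complex.exp (-Complex.I * (t x : ℂ)) - 1 - (-Complex.I * (t x : ℂ))‖
            ≤ 1 * ‖-Complex.I * (t x : ℂ)‖^2 :=
              mul_le_mul (hna x) hexp (norm_nonneg _) zero_le_one
          _ = |t x|^2 := by rw [one_mul, hnz x]
          _ ≤ ‖ξ‖^2 := by
              have := hnt x
              nlinarith [abs_nonneg (t x)]
    _ = (((volume : Measure (EuclideanSpace ℝ (Fin n))).toSphere Set.univ).toReal) * ‖ξ‖^2 := by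
        rw [integral_const, smul_eq_mul, measureReal_def]




end AuxProofs

/-- For `n ≥ 3` and `k ≥ 1`,
`∫_{∂B(0,1)} x_1^{2k} e^{−i x·ξ} dσ(x) = (2π)^{n/2} (2k−1)!! Ψ_{n/2+k−1}(ξ) + o(|ξ|)`
as `ξ → 0`; in particular the limit as `ξ → 0` equals
`(2π)^{n/2} (2k−1)!! 2^{−(n/2+k−1)}/Γ(n/2+k)`. -/
theorem fourier_transform_even_monomial_sphere (n : ℕ) (hn : 3 ≤ n) (i1 : Fin n)
    (hi1 : (i1 : ℕ) = 0) (k : ℕ) (hk : 1 ≤ k) :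
    (fun ξ : EuclideanSpace ℝ (Fin n) =>
      (∫ x : Metric.sphere (0 : EuclideanSpace ℝ (Fin n)) 1,
        (((x : EuclideanSpace ℝ (Fin n)) i1) ^ (2 * k) : ℂ) *
          Complex.exp (-Complex.I * (⟪(x : EuclideanSpace ℝ (Fin n)), ξ⟫ : ℝ))
        ∂((volume : Measure (EuclideanSpace ℝ (Fin n))).toSphere)) -
      (((2 * π) ^ ((n : ℝ) / 2) * (Nat.doubleFactorial (2 * k - 1) : ℝ) *
        PsiE ((n : ℝ) / 2 + k - 1) ξ : ℝ) : ℂ))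
      =o[nhds 0] (fun ξ : EuclideanSpace ℝ (Fin n) => ‖ξ‖) ∧
    Tendsto (fun ξ : EuclideanSpace ℝ (Fin n) =>
      ∫ x : Metric.sphere (0 : EuclideanSpace ℝ (Fin n)) 1,
        (((x : EuclideanSpace ℝ (Fin n)) i1) ^ (2 * k) : ℂ) *
          Complex.exp (-Complex.I * (⟪(x : EuclideanSpace ℝ (Fin n)), ξ⟫ : ℝ))
        ∂((volume : Measure (EuclideanSpace ℝ (Fin n))).toSphere))
      (nhds 0)
      (nhds (((2 * π) ^ ((n : ℝ) / 2) * (Nat.doubleFactorial (2 * k - 1) : ℝ) *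
        ((2 : ℝ) ^ (-((n : ℝ) / 2 + k - 1)) / Real.Gamma ((n : ℝ) / 2 + k)) : ℝ) : ℂ)) := by
  have hn3 : (3:ℝ) ≤ (n:ℝ) := by exact_mod_cast hn
  have hk1 : (1:ℝ) ≤ (k:ℝ) := by exact_mod_cast hk
  set ν : ℝ := (n : ℝ) / 2 + k - 1 with hν_def
  have hν0 : 0 ≤ ν := by rw [hν_def]; linarith
  obtain ⟨C, hCnn, hC⟩ := sser_bound ν hν0
  set dF : ℝ := (Nat.doubleFactorial (2 * k - 1) : ℝ) with hdF
  have hdFnn : 0 ≤ dF := by rw [hdF]; positivity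
  set C0 : ℝ := (2 * π) ^ ((n : ℝ) / 2) * dF with hC0def
  have hC0nn : 0 ≤ C0 := by rw [hC0def]; positivity
  set M : ℝ := (((volume : Measure (EuclideanSpace ℝ (Fin n))).toSphere Set.univ).toReal)
    with hM
  have hMnn : 0 ≤ M := ENNReal.toReal_nonneg
  set Φ : EuclideanSpace ℝ (Fin n) → ℂ := fun ξ =>
    ∫ x : Metric.sphere (0 : EuclideanSpace ℝ (Fin n)) 1,
        (((x : EuclideanSpace ℝ (Fin n)) i1) ^ (2 * k) : ℂ) *
          Complex.exp (-Complex.I * (⟪(x : EuclideanSpace ℝ (Fin n)), ξ⟫ : ℝ))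
        ∂((volume : Measure (EuclideanSpace ℝ (Fin n))).toSphere) with hΦ
  set T : EuclideanSpace ℝ (Fin n) → ℝ := fun ξ => C0 * PsiE ν ξ with hT
  set S0 : ℝ := ∫ y : Metric.sphere (0 : EuclideanSpace ℝ (Fin n)) 1,
    ((y : EuclideanSpace ℝ (Fin n)) i1)^(2*k)
    ∂((volume : Measure (EuclideanSpace ℝ (Fin n))).toSphere) with hS0def
  have hG1 : ν + 1 = (n:ℝ)/2 + k := by rw [hν_def]; ring
  have hS0 : S0 = C0 * ((2:ℝ)^(-ν) / Real.Gamma (ν + 1)) := by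
    rw [hS0def, sphere_moment hn i1 k, hG1, hC0def]
    ring
  have hpsi : ∀ ξ : EuclideanSpace ℝ (Fin n), PsiE ν ξ = (2:ℝ)^(-ν) * Sser ν ‖ξ‖ :=
    fun ξ => psi_eq_sser ν hν0 ξ
  have hTdiff : ∀ ξ : EuclideanSpace ℝ (Fin n), ‖ξ‖ ≤ 1 →
      |T ξ - S0| ≤ C0 * (2:ℝ)^(-ν) * C * ‖ξ‖^2 := by
    intro ξ hξ
    simp only [hT, hS0]
    rw [hpsi ξ]
    have h2nn : (0:ℝ) ≤ (2:ℝ)^(-ν) := (Real.rpow_pos_of_pos two_pos _).le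
    have hq := hC ‖ξ‖ (norm_nonneg _) hξ
    calc |C0 * ((2:ℝ)^(-ν) * Sser ν ‖ξ‖) - C0 * ((2:ℝ)^(-ν) / Real.Gamma (ν + 1))|
        = C0 * (2:ℝ)^(-ν) * |Sser ν ‖ξ‖ - 1 / Real.Gamma (ν + 1)| := by
          rw [← abs_of_nonneg (mul_nonneg hC0nn h2nn), ← abs_mul]
          congr 1
          field_simp
      _ ≤ C0 * (2:ℝ)^(-ν) * (C * ‖ξ‖^2) :=
          mul_le_mul_of_nonneg_left hq (mul_nonneg hC0nn h2nn)
      _ = C0 * (2:ℝ)^(-ν) * C * ‖ξ‖^2 := by ring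
  set K : ℝ := M + C0 * (2:ℝ)^(-ν) * C with hK
  have hKnn : 0 ≤ K := by
    have h2nn : (0:ℝ) ≤ (2:ℝ)^(-ν) := (Real.rpow_pos_of_pos two_pos _).le
    rw [hK]; positivity
  have key : ∀ ξ : EuclideanSpace ℝ (Fin n), ‖ξ‖ ≤ 1 →
      ‖Φ ξ - ((T ξ : ℝ) : ℂ)‖ ≤ K * ‖ξ‖^2 := by
    intro ξ hξ
    have h1 := phi_bound hn i1 k ξ hξ
    have h2 := hTdiff ξ hξ
    calc ‖Φ ξ - ((T ξ : ℝ) : ℂ)‖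
        = ‖(Φ ξ - ((S0 : ℝ) : ℂ)) + (((S0 - T ξ : ℝ)) : ℂ)‖ := by
          congr 1
          push_cast
          ring
      _ ≤ ‖Φ ξ - ((S0 : ℝ) : ℂ)‖ + ‖(((S0 - T ξ : ℝ)) : ℂ)‖ := norm_add_le _ _
      _ ≤ M * ‖ξ‖^2 + C0 * (2:ℝ)^(-ν) * C * ‖ξ‖^2 := by
          refine add_le_add h1 ?_
          rw [Complex.norm_real, Real.norm_eq_abs, abs_sub_comm]
          exact h2
      _ = K * ‖ξ‖^2 := by rw [hK]; ring
  have hev : ∀ᶠ ξ : EuclideanSpace ℝ (Fin n) in nhds 0, ‖ξ‖ ≤ 1 := by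
    filter_upwards [Metric.ball_mem_nhds (0 : EuclideanSpace ℝ (Fin n)) one_pos] with ξ hξ
    rw [Metric.mem_ball, dist_zero_right] at hξ
    exact hξ.le
  constructor
  · rw [Asymptotics.isLittleO_iff]
    intro ε hε
    have hδ : (0:ℝ) < min 1 (ε / (K + 1)) := by
      refine lt_min one_pos (div_pos hε (by linarith))
    filter_upwards [Metric.ball_mem_nhds (0 : EuclideanSpace ℝ (Fin n)) hδ] with ξ hξ
    rw [Metric.mem_ball, dist_zero_right] at hξ
    have hξ1 : ‖ξ‖ ≤ 1 := hξ.le.trans (min_le_left _ _)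
    have hξ2 : ‖ξ‖ ≤ ε / (K + 1) := hξ.le.trans (min_le_right _ _)
    have := key ξ hξ1
    rw [norm_norm]
    have hKK : K * ‖ξ‖ ≤ ε := by
      calc K * ‖ξ‖ ≤ K * (ε / (K + 1)) :=
            mul_le_mul_of_nonneg_left hξ2 hKnn
        _ ≤ ε := by
            rw [mul_div_assoc']
            rw [div_le_iff₀ (by linarith : (0:ℝ) < K + 1)]
            nlinarith
    calc ‖Φ ξ - ((T ξ : ℝ) : ℂ)‖ ≤ K * ‖ξ‖^2 := this
      _ = (K * ‖ξ‖) * ‖ξ‖ := by ring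
      _ ≤ ε * ‖ξ‖ := mul_le_mul_of_nonneg_right hKK (norm_nonneg _)
  · have hlim0 : Tendsto (fun ξ : EuclideanSpace ℝ (Fin n) => Φ ξ - ((T ξ : ℝ) : ℂ))
        (nhds 0) (nhds 0) := by
      refine squeeze_zero_norm' (a := fun ξ : EuclideanSpace ℝ (Fin n) => K * ‖ξ‖^2) ?_ ?_
      · filter_upwards [hev] with ξ hξ
        exact key ξ hξ
      · have : Tendsto (fun ξ : EuclideanSpace ℝ (Fin n) => K * ‖ξ‖^2) (nhds 0)
            (nhds (K * ‖(0:EuclideanSpace ℝ (Fin n))‖^2)) :=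
          (continuous_const.mul ((continuous_norm).pow 2)).tendsto 0
        simpa using this
    have hlimT : Tendsto (fun ξ : EuclideanSpace ℝ (Fin n) => T ξ) (nhds 0)
        (nhds (C0 * ((2:ℝ)^(-ν) / Real.Gamma (ν + 1)))) := by
      rw [← hS0]
      have h0 : Tendsto (fun ξ : EuclideanSpace ℝ (Fin n) => T ξ - S0) (nhds 0) (nhds 0) := by
        refine squeeze_zero_norm'
          (a := fun ξ : EuclideanSpace ℝ (Fin n) => C0 * (2:ℝ)^(-ν) * C * ‖ξ‖^2) ?_ ?_
        · filter_upwards [hev] with ξ hξ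
          rw [Real.norm_eq_abs]
          exact hTdiff ξ hξ
        · have : Tendsto (fun ξ : EuclideanSpace ℝ (Fin n) => C0 * (2:ℝ)^(-ν) * C * ‖ξ‖^2)
              (nhds 0) (nhds (C0 * (2:ℝ)^(-ν) * C * ‖(0:EuclideanSpace ℝ (Fin n))‖^2)) :=
            (continuous_const.mul ((continuous_norm).pow 2)).tendsto 0
          simpa using this
      have := h0.add_const S0
      simpa using this
    have hlimTC : Tendsto (fun ξ : EuclideanSpace ℝ (Fin n) => ((T ξ : ℝ) : ℂ)) (nhds 0)
        (nhds (((C0 * ((2:ℝ)^(-ν) / Real.Gamma (ν + 1)) : ℝ)) : ℂ)) :=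
      (Complex.continuous_ofReal.tendsto _).comp hlimT
    have hsum := hlim0.add hlimTC
    rw [zero_add] at hsum
    have hfun : (fun ξ : EuclideanSpace ℝ (Fin n) => (Φ ξ - ((T ξ : ℝ) : ℂ)) + ((T ξ : ℝ) : ℂ))
        = Φ := by funext ξ; ring
    rw [hfun] at hsum
    have hval : ((C0 * ((2:ℝ)^(-ν) / Real.Gamma (ν + 1)) : ℝ) : ℂ)
        = (((2 * π) ^ ((n : ℝ) / 2) * (Nat.doubleFactorial (2 * k - 1) : ℝ) *
          ((2 : ℝ) ^ (-((n : ℝ) / 2 + k - 1)) / Real.Gamma ((n : ℝ) / 2 + k)) : ℝ) : ℂ) := by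
      congr 1
      rw [hC0def, hG1, hν_def]
    rw [hval] at hsum
    exact hsum
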